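/- Let d be a metric on X and 𝔠_d = {A ⊆ P(X) : ∃k>0 with d_H(A,B) ≤ k for all A,B ∈ A} (d_H the Hausdorff distance). A family U of subsets of X is uniformly bounded in the LS.R space (X, 𝔠_d) if and only if there exists R > 0 with diam(U) ≤ R for all U ∈ U. -/

import Mathlib

def AVfam {X : Type*} (𝓥 : Set (Set X)) : Set (Set X) :=
  {A | A ⊆ ⋃₀ 𝓥 ∧ ∀ U ∈ 𝓥, (A ∩ U).Nonempty}

def LSRUnifBounded {X : Type*} (𝔠 : Set (Set (Set X))) (𝓤 : Set (Set X)) : Prop :=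
  ∀ 𝓥 : Set (Set X), 𝓥 ⊆ 𝓤 → 𝓥.Nonempty → AVfam 𝓥 ∈ 𝔠

def Cd (X : Type*) [MetricSpace X] : Set (Set (Set X)) :=
  {𝓐 | ∃ k : ℝ, 0 < k ∧ ∀ A ∈ 𝓐, ∀ B ∈ 𝓐,
    EMetric.hausdorffEdist A B ≤ ENNReal.ofReal k}

theorem stmt14 {X : Type*} [MetricSpace X] (𝓤 : Set (Set X)) :
    LSRUnifBounded (Cd X) 𝓤 ↔
      ∃ R : ℝ, 0 < R ∧ ∀ U ∈ 𝓤, EMetric.diam U ≤ ENNReal.ofReal R := by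
  constructor
  · -- hard direction
    intro hLSR
    by_contra hRc
    push_neg at hRc
    -- unbounded pairs
    have hinf : ∀ R : ℝ, ∃ U ∈ 𝓤, ∃ a ∈ U, ∃ b ∈ U, ENNReal.ofReal R < edist a b := by
      intro R
      obtain ⟨U, hU, hd⟩ := hRc (max R 1) (lt_of_lt_of_le one_pos (le_max_right _ _))
      have h2 : ¬ (∀ a ∈ U, ∀ b ∈ U, edist a b ≤ ENNReal.ofReal (max R 1)) :=
        fun h => absurd (EMetric.diam_le h) (not_le.mpr hd)
      push_neg at h2
      obtain ⟨a, ha, b, hb, hab⟩ := h2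
      exact ⟨U, hU, a, ha, b, hb,
        lt_of_le_of_lt (ENNReal.ofReal_le_ofReal (le_max_left _ _)) hab⟩
    by_cases hP : ∃ p : X, ∃ r : ℝ, 0 ≤ r ∧ ∀ M : ℝ, ∃ U ∈ 𝓤, ∃ a ∈ U, ∃ b ∈ U,
        edist a p ≤ ENNReal.ofReal r ∧ ENNReal.ofReal M < edist a b
    · -- anchored case
      obtain ⟨p, r, hr, hfn⟩ := hP
      choose U hU a ha b hb hnear hfar using fun n : ℕ => hfn n
      obtain ⟨k, hk, hbd⟩ := hLSR (Set.range U)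
        (by rintro _ ⟨n, rfl⟩; exact hU n) ⟨U 0, 0, rfl⟩
      have hAmem : Set.range a ∈ AVfam (Set.range U) := by
        constructor
        · rintro _ ⟨n, rfl⟩; exact ⟨U n, ⟨n, rfl⟩, ha n⟩
        · rintro V ⟨n, rfl⟩; exact ⟨a n, ⟨n, rfl⟩, ha n⟩
      set N : ℕ := ⌈2*r + k + 1⌉₊ with hN
      have hBmem : Set.range a ∪ {b N} ∈ AVfam (Set.range U) := by
        constructor
        · rintro x hx
          rcases hx with hx | hx
          · exact hAmem.1 hx
          · rcases hx with rfl; exact ⟨U N, ⟨N, rfl⟩, hb N⟩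
        · rintro V ⟨n, rfl⟩; exact ⟨a n, Or.inl ⟨n, rfl⟩, ha n⟩
      have hHD : EMetric.hausdorffEdist (Set.range a) (Set.range a ∪ {b N}) ≤
          ENNReal.ofReal k := hbd _ hAmem _ hBmem
      have h1 : EMetric.infEdist (b N) (Set.range a) < ENNReal.ofReal (k+1) := by
        calc EMetric.infEdist (b N) (Set.range a)
            ≤ EMetric.hausdorffEdist (Set.range a ∪ {b N}) (Set.range a) :=
              EMetric.infEdist_le_hausdorffEdist_of_mem (Or.inr rfl)
          _ = EMetric.hausdorffEdist (Set.range a) (Set.range a ∪ {b N}) :=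
              EMetric.hausdorffEdist_comm
          _ ≤ ENNReal.ofReal k := hHD
          _ < ENNReal.ofReal (k+1) := by
              rw [ENNReal.ofReal_lt_ofReal_iff (by linarith)]; linarith
      obtain ⟨y, hy, hylt⟩ := EMetric.infEdist_lt_iff.1 h1
      obtain ⟨m, rfl⟩ := hy
      have hchain : edist (a N) (b N) ≤ ENNReal.ofReal (2*r + k + 1) := by
        calc edist (a N) (b N)
            ≤ edist (a N) p + edist p (a m) + edist (a m) (b N) :=
              edist_triangle4 _ _ _ _
          _ ≤ ENNReal.ofReal r + ENNReal.ofReal r + ENNReal.ofReal (k+1) := by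
              gcongr
              · exact hnear N
              · rw [edist_comm]; exact hnear m
              · rw [edist_comm]; exact hylt.le
          _ = ENNReal.ofReal (r + r + (k+1)) := by
              rw [ENNReal.ofReal_add (show (0:ℝ) ≤ r + r by linarith)
                (show (0:ℝ) ≤ k + 1 by linarith), ENNReal.ofReal_add hr hr]
          _ = ENNReal.ofReal (2*r + k + 1) := by congr 1; ring
      have hNlt : ENNReal.ofReal (N : ℝ) < edist (a N) (b N) := hfar N
      have hle : ENNReal.ofReal (2*r+k+1) ≤ ENNReal.ofReal (N : ℝ) :=
        ENNReal.ofReal_le_ofReal (Nat.le_ceil _)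
      exact absurd (hNlt.trans_le hchain) (not_lt.mpr hle)
    · -- non-anchored case
      push_neg at hP
      have hQ : ∀ (p : X) (r : ℝ), ∃ M : ℝ, 0 ≤ r → ∀ U ∈ 𝓤, ∀ a ∈ U, ∀ b ∈ U,
          edist a p ≤ ENNReal.ofReal r → edist a b ≤ ENNReal.ofReal M := by
        intro p r
        by_cases hr : 0 ≤ r
        · obtain ⟨M, hM⟩ := hP p r hr
          exact ⟨M, fun _ => hM⟩
        · exact ⟨0, fun h => absurd h hr⟩
      choose Mf hMf using hQ
      have key : ∀ s : Finset (ℝ × X × X),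
          (∀ x ∈ s, (fun z : ℝ × X × X => 0 ≤ z.1 ∧ ∃ U ∈ 𝓤, z.2.1 ∈ U ∧ z.2.2 ∈ U ∧
            ENNReal.ofReal z.1 < edist z.2.1 z.2.2) x) →
          ∃ y, (fun z : ℝ × X × X => 0 ≤ z.1 ∧ ∃ U ∈ 𝓤, z.2.1 ∈ U ∧ z.2.2 ∈ U ∧
            ENNReal.ofReal z.1 < edist z.2.1 z.2.2) y ∧
          ∀ x ∈ s, (fun x y : ℝ × X × X => x.1 + 1 ≤ y.1 ∧
            ENNReal.ofReal y.1 < edist y.2.1 x.2.2 ∧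
            ENNReal.ofReal y.1 < edist y.2.2 x.2.1) x y := by
        intro s _
        set L : ℝ := 1 + s.sum (fun x => |x.1|) with hL
        have hs0 : (0:ℝ) ≤ s.sum (fun x => |x.1|) :=
          Finset.sum_nonneg fun i _ => abs_nonneg _
        have hL0 : 0 ≤ L := by rw [hL]; linarith
        set M : ℝ := L + s.sum (fun x => |Mf x.2.1 L| + |Mf x.2.2 L|) with hM
        have hsM : (0:ℝ) ≤ s.sum (fun x => |Mf x.2.1 L| + |Mf x.2.2 L|) :=
          Finset.sum_nonneg fun i _ => by positivity
        have hLM : L ≤ M := by rw [hM]; linarith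
        obtain ⟨U, hU, aa, haa, bb, hbb, hab⟩ := hinf M
        refine ⟨(L, aa, bb), ⟨hL0, U, hU, haa, hbb,
          lt_of_le_of_lt (ENNReal.ofReal_le_ofReal hLM) hab⟩, ?_⟩
        intro x hx
        have hx1 : |x.1| ≤ s.sum (fun x => |x.1|) :=
          Finset.single_le_sum (f := fun z : ℝ × X × X => |z.1|) (fun i _ => abs_nonneg _) hx
        have hx2 : |Mf x.2.1 L| + |Mf x.2.2 L| ≤
            s.sum (fun x => |Mf x.2.1 L| + |Mf x.2.2 L|) :=
          Finset.single_le_sum (f := fun z : ℝ × X × X => |Mf z.2.1 L| + |Mf z.2.2 L|)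
            (fun i _ => by positivity) hx
        refine ⟨by have := le_abs_self x.1; rw [hL]; linarith, ?_, ?_⟩
        · by_contra hcon
          rw [not_lt] at hcon
          have hle := hMf x.2.2 L hL0 U hU aa haa bb hbb hcon
          have hMle : ENNReal.ofReal (Mf x.2.2 L) ≤ ENNReal.ofReal M := by
            apply ENNReal.ofReal_le_ofReal
            have h2 := le_abs_self (Mf x.2.2 L)
            have h3 := abs_nonneg (Mf x.2.1 L)
            rw [hM]; linarith
          exact absurd hab (not_lt.mpr (hle.trans hMle))
        · by_contra hcon
          rw [not_lt] at hcon
          have hle := hMf x.2.1 L hL0 U hU bb hbb aa haa hcon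
          rw [edist_comm] at hle
          have hMle : ENNReal.ofReal (Mf x.2.1 L) ≤ ENNReal.ofReal M := by
            apply ENNReal.ofReal_le_ofReal
            have h2 := le_abs_self (Mf x.2.1 L)
            have h3 := abs_nonneg (Mf x.2.2 L)
            rw [hM]; linarith
          exact absurd hab (not_lt.mpr (hle.trans hMle))
      obtain ⟨f, hPf, hRf⟩ := exists_seq_of_forall_finset_exists _ _ key
      choose Uf hUf hafm hbfm hfard using fun n => (hPf n).2
      have hlev : ∀ n : ℕ, (n : ℝ) ≤ (f n).1 := by
        intro n
        induction n with
        | zero => exact_mod_cast (hPf 0).1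
        | succ n ih =>
          have h := (hRf n (n+1) (Nat.lt_succ_self n)).1
          push_cast
          linarith
      obtain ⟨k, hk, hbd⟩ := hLSR (Set.range Uf)
        (by rintro _ ⟨n, rfl⟩; exact hUf n) ⟨Uf 0, 0, rfl⟩
      obtain ⟨j, hkj⟩ : ∃ j : ℕ, k < (j : ℝ) := ⟨⌈k⌉₊ + 1, by
        have := Nat.le_ceil k
        push_cast
        linarith⟩
      have hAm : Set.range (fun n => (f n).2.1) ∈ AVfam (Set.range Uf) :=
        ⟨by rintro _ ⟨n, rfl⟩; exact ⟨Uf n, ⟨n, rfl⟩, hafm n⟩,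
         by rintro V ⟨n, rfl⟩; exact ⟨(f n).2.1, ⟨n, rfl⟩, hafm n⟩⟩
      have hBm : Set.range (fun n => (f n).2.2) ∈ AVfam (Set.range Uf) :=
        ⟨by rintro _ ⟨n, rfl⟩; exact ⟨Uf n, ⟨n, rfl⟩, hbfm n⟩,
         by rintro V ⟨n, rfl⟩; exact ⟨(f n).2.2, ⟨n, rfl⟩, hbfm n⟩⟩
      have hHD := hbd _ hAm _ hBm
      have hfarall : ∀ i : ℕ, ENNReal.ofReal (j : ℝ) ≤ edist ((f j).2.2) ((f i).2.1) := by
        intro i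
        rcases lt_trichotomy i j with h | h | h
        · exact le_trans (ENNReal.ofReal_le_ofReal (hlev j)) (hRf i j h).2.2.le
        · subst h
          rw [edist_comm]
          exact le_trans (ENNReal.ofReal_le_ofReal (hlev i)) (hfard i).le
        · rw [edist_comm]
          refine le_trans ?_ (hRf j i h).2.1.le
          refine ENNReal.ofReal_le_ofReal (le_trans ?_ (hlev i))
          exact_mod_cast h.le
      have h1 : ENNReal.ofReal (j : ℝ) ≤
          EMetric.infEdist ((f j).2.2) (Set.range fun n => (f n).2.1) := by
        apply EMetric.le_infEdist.2
        rintro _ ⟨i, rfl⟩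
        exact hfarall i
      have h2 : EMetric.infEdist ((f j).2.2) (Set.range fun n => (f n).2.1) ≤
          ENNReal.ofReal k := by
        calc EMetric.infEdist ((f j).2.2) (Set.range fun n => (f n).2.1)
            ≤ EMetric.hausdorffEdist (Set.range fun n => (f n).2.2)
              (Set.range fun n => (f n).2.1) :=
              EMetric.infEdist_le_hausdorffEdist_of_mem ⟨j, rfl⟩
          _ = EMetric.hausdorffEdist (Set.range fun n => (f n).2.1)
              (Set.range fun n => (f n).2.2) := EMetric.hausdorffEdist_comm
          _ ≤ ENNReal.ofReal k := hHD
      have hjk : (j : ℝ) ≤ k := by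
        have := h1.trans h2
        rwa [ENNReal.ofReal_le_ofReal_iff hk.le] at this
      linarith
  · -- easy direction
    rintro ⟨R, hR, hdiam⟩ 𝓥 hsub hne
    refine ⟨R, hR, ?_⟩
    intro A hA B hB
    apply EMetric.hausdorffEdist_le_of_infEdist
    · intro x hx
      obtain ⟨U, hU, hxU⟩ := hA.1 hx
      obtain ⟨y, hyB, hyU⟩ := hB.2 U hU
      calc EMetric.infEdist x B ≤ edist x y := EMetric.infEdist_le_edist_of_mem hyB
        _ ≤ EMetric.diam U := EMetric.edist_le_diam_of_mem hxU hyU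
        _ ≤ ENNReal.ofReal R := hdiam U (hsub hU)
    · intro x hx
      obtain ⟨U, hU, hxU⟩ := hB.1 hx
      obtain ⟨y, hyA, hyU⟩ := hA.2 U hU
      calc EMetric.infEdist x A ≤ edist x y := EMetric.infEdist_le_edist_of_mem hyA
        _ ≤ EMetric.diam U := EMetric.edist_le_diam_of_mem hxU hyU
        _ ≤ ENNReal.ofReal R := hdiam U (hsub hU)
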